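/- arXiv:math/9903073 — 2 statements merged into one kernel-verified Lean document; each statement's English description precedes it below -/
import Mathlib

section
/- Let m ≥ 0 be an integer with (m+2)γ > 1. Then for all t ≥ 1, ∫ₜ^∞ s^{-2} h₀(s) N_m(s) ds = P_m(t), where P_m(t) = ∫₁^∞ s^{-γ} h(max(t,s)) h(s)^m ds. -/
open MeasureTheory Real

noncomputable def h0 (γ t : ℝ) : ℝ := ∫ s in (1:ℝ)..t, s ^ (-γ)

noncomputable def hfun (γ t : ℝ) : ℝ := ∫ s in Set.Ioi (1:ℝ), s ^ (-γ) * (max t s)⁻¹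

noncomputable def Nfun (γ : ℝ) (m : ℕ) (t : ℝ) : ℝ := ∫ s in (1:ℝ)..t, s ^ (-γ) * (hfun γ s) ^ m

noncomputable def Qfun (γ : ℝ) (m : ℕ) (t : ℝ) : ℝ :=
  ∫ s in Set.Ioi (1:ℝ), s ^ (-γ) * (max t s)⁻¹ * (hfun γ s) ^ m

noncomputable def Pfun (γ : ℝ) (m : ℕ) (t : ℝ) : ℝ :=
  ∫ s in Set.Ioi (1:ℝ), s ^ (-γ) * hfun γ (max t s) * (hfun γ s) ^ m

noncomputable def Rfun (γ : ℝ) (m : ℕ) (t : ℝ) : ℝ :=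
  ∫ s in Set.Ioi t, s ^ (-2 : ℝ) * Pfun γ m s

open Set Filter Topology

lemma contOn_rpow (p : ℝ) : ContinuousOn (fun s : ℝ => s ^ p) (Set.Ioi 0) := fun x hx =>
  (Real.continuousAt_rpow_const x p (Or.inl (ne_of_gt hx))).continuousWithinAt

lemma uIcc_subset_pos {x : ℝ} (hx : 0 < x) : Set.uIcc (1:ℝ) x ⊆ Set.Ioi 0 := by
  intro y hy
  rcases Set.mem_uIcc.mp hy with h | h
  · exact lt_of_lt_of_le one_pos h.1
  · exact lt_of_lt_of_le hx h.1

lemma hasDerivAt_h0 (γ : ℝ) {x : ℝ} (hx : 0 < x) : HasDerivAt (h0 γ) (x ^ (-γ)) x := by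
  unfold h0
  apply intervalIntegral.integral_hasDerivAt_right
  · exact ((contOn_rpow (-γ)).mono (uIcc_subset_pos hx)).intervalIntegrable
  · exact (contOn_rpow (-γ)).stronglyMeasurableAtFilter isOpen_Ioi x hx
  · exact Real.continuousAt_rpow_const x _ (Or.inl hx.ne')

lemma contOn_h0 (γ : ℝ) : ContinuousOn (h0 γ) (Set.Ici 1) := fun x hx =>
  ((hasDerivAt_h0 γ (lt_of_lt_of_le one_pos hx)).continuousAt).continuousWithinAt

lemma hasDerivAt_primitive {f : ℝ → ℝ} (hf : ContinuousOn f (Set.Ici 1)) {x : ℝ} (hx : 1 < x) :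
    HasDerivAt (fun u => ∫ s in (1:ℝ)..u, f s) (f x) x := by
  have hsub : Set.uIcc (1:ℝ) x ⊆ Set.Ici 1 := by
    rw [Set.uIcc_of_le hx.le]; exact Set.Icc_subset_Ici_self
  have hopen : ContinuousOn f (Set.Ioi 1) := hf.mono (Set.Ioi_subset_Ici le_rfl)
  refine intervalIntegral.integral_hasDerivAt_right
    ((hf.mono hsub).intervalIntegrable)
    (hopen.stronglyMeasurableAtFilter isOpen_Ioi x hx)
    ((hf x hx.le).continuousAt ?_)
  exact Filter.mem_of_superset (isOpen_Ioi.mem_nhds hx) (Set.Ioi_subset_Ici le_rfl)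

lemma contOn_primitive_Ici {f : ℝ → ℝ} (hf : ContinuousOn f (Set.Ici 1)) :
    ContinuousOn (fun u => ∫ s in (1:ℝ)..u, f s) (Set.Ici 1) := by
  intro x hx
  rcases eq_or_lt_of_le (Set.mem_Ici.mp hx) with h | h
  · have h_int : IntegrableOn f (Set.uIcc (1:ℝ) 2) := by
      rw [Set.uIcc_of_le one_le_two]
      exact (hf.mono (Set.Icc_subset_Ici_self)).integrableOn_compact isCompact_Icc
    have hcont := intervalIntegral.continuousOn_primitive_interval h_int
    have h1 : (1:ℝ) ∈ Set.uIcc (1:ℝ) 2 := Set.left_mem_uIcc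
    have hw := hcont 1 h1
    rw [← h]
    have : 𝓝[Set.Ici (1:ℝ)] 1 = 𝓝[Set.uIcc (1:ℝ) 2] 1 := by
      rw [Set.uIcc_of_le one_le_two, ← Set.Ici_inter_Iic,
        nhdsWithin_inter_of_mem']
      exact nhdsWithin_le_nhds (Iic_mem_nhds one_lt_two)
    exact hw.mono_left (le_of_eq this)
  · exact (hasDerivAt_primitive hf h).continuousAt.continuousWithinAt

lemma Icc_one_subset_pos {t : ℝ} : Set.Icc (1:ℝ) t ⊆ Set.Ioi 0 := fun y hy =>
  lt_of_lt_of_le one_pos hy.1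

lemma hfun_eq {γ : ℝ} (hγ : 0 < γ) {t : ℝ} (ht : 1 ≤ t) :
    hfun γ t = t⁻¹ * h0 γ t + t ^ (-γ) / γ := by
  have ht0 : (0:ℝ) < t := lt_of_lt_of_le one_pos ht
  have hsplit : Set.Ioi (1:ℝ) = Set.Ioc 1 t ∪ Set.Ioi t := (Set.Ioc_union_Ioi_eq_Ioi ht).symm
  have hI1 : IntegrableOn (fun s : ℝ => s ^ (-γ) * (max t s)⁻¹) (Set.Ioc 1 t) := by
    apply IntegrableOn.mono_set _ Set.Ioc_subset_Icc_self
    apply ContinuousOn.integrableOn_compact isCompact_Icc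
    apply ContinuousOn.mul ((contOn_rpow (-γ)).mono Icc_one_subset_pos)
    apply ContinuousOn.inv₀ (continuous_const.max continuous_id).continuousOn
    intro s hs
    exact ne_of_gt (lt_of_lt_of_le one_pos (le_trans ht (le_max_left t s)))
  have heq2 : Set.EqOn (fun s : ℝ => s ^ (-γ - 1)) (fun s : ℝ => s ^ (-γ) * (max t s)⁻¹)
      (Set.Ioi t) := by
    intro s hs
    have hs0 : (0:ℝ) < s := lt_trans ht0 hs
    simp only
    rw [max_eq_right (le_of_lt hs), ← Real.rpow_neg_one s, ← Real.rpow_add hs0]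
    ring_nf
  have hI2 : IntegrableOn (fun s : ℝ => s ^ (-γ) * (max t s)⁻¹) (Set.Ioi t) :=
    (integrableOn_Ioi_rpow_of_lt (by linarith) ht0).congr_fun heq2 measurableSet_Ioi
  have p1 : ∫ s in Set.Ioc 1 t, s ^ (-γ) * (max t s)⁻¹ = t⁻¹ * h0 γ t := by
    rw [setIntegral_congr_fun measurableSet_Ioc
      (fun s hs => by simp only [max_eq_left hs.2] : Set.EqOn (fun s : ℝ => s ^ (-γ) * (max t s)⁻¹)
        (fun s : ℝ => s ^ (-γ) * t⁻¹) (Set.Ioc 1 t))]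
    rw [MeasureTheory.integral_mul_const, ← intervalIntegral.integral_of_le ht]
    rw [mul_comm]; rfl
  have p2 : ∫ s in Set.Ioi t, s ^ (-γ) * (max t s)⁻¹ = t ^ (-γ) / γ := by
    rw [← setIntegral_congr_fun measurableSet_Ioi heq2]
    rw [integral_Ioi_rpow_of_lt (by linarith) ht0]
    rw [show -γ - 1 + 1 = -γ by ring, neg_div_neg_eq]
  rw [show hfun γ t = ∫ s in Set.Ioi (1:ℝ), s ^ (-γ) * (max t s)⁻¹ from rfl, hsplit,
    setIntegral_union (Set.Ioc_disjoint_Ioi le_rfl) measurableSet_Ioi hI1 hI2, p1, p2]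

lemma contOn_hfun {γ : ℝ} (hγ : 0 < γ) : ContinuousOn (hfun γ) (Set.Ici 1) := by
  have hc : ContinuousOn (fun t : ℝ => t⁻¹ * h0 γ t + t ^ (-γ) / γ) (Set.Ici 1) := by
    apply ContinuousOn.add
    · apply ContinuousOn.mul _ (contOn_h0 γ)
      exact continuousOn_inv₀.mono (fun y hy => by
        simp only [Set.mem_compl_iff, Set.mem_singleton_iff]
        have : (1:ℝ) ≤ y := hy
        intro h; rw [h] at this; norm_num at this)
    · exact (((contOn_rpow (-γ)).mono (fun y (hy : y ∈ Set.Ici (1:ℝ)) => Set.mem_Ioi.mpr (lt_of_lt_of_le one_pos hy))).div_const γ)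
  exact hc.congr (fun t htt => hfun_eq hγ htt)

lemma hasDerivAt_hfun {γ : ℝ} (hγ : 0 < γ) {x : ℝ} (hx : 1 < x) :
    HasDerivAt (hfun γ) (-(x ^ (-2:ℝ) * h0 γ x)) x := by
  have hx0 : (0:ℝ) < x := by linarith
  have d1 : HasDerivAt (fun t : ℝ => t⁻¹) (-(x^2)⁻¹) x := hasDerivAt_inv hx0.ne'
  have d2 := hasDerivAt_h0 γ hx0
  have d3 : HasDerivAt (fun t : ℝ => t ^ (-γ)) (-γ * x ^ (-γ - 1)) x :=
    Real.hasDerivAt_rpow_const (Or.inl hx0.ne')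
  have hD := (d1.mul d2).add (d3.div_const γ)
  have hcongr : HasDerivAt (fun t : ℝ => t⁻¹ * h0 γ t + t ^ (-γ) / γ)
      (-(x ^ (-2:ℝ) * h0 γ x)) x := by
    have hD' : HasDerivAt (fun t : ℝ => t⁻¹ * h0 γ t + t ^ (-γ) / γ)
        (-(x^2)⁻¹ * h0 γ x + x⁻¹ * x ^ (-γ) + -γ * x ^ (-γ - 1) / γ) x := hD
    convert hD' using 1
    have e1 : x ^ (-2:ℝ) = (x^2)⁻¹ := by
      rw [Real.rpow_neg hx0.le, show (2:ℝ) = ((2:ℕ):ℝ) by norm_num, Real.rpow_natCast]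
    have e2 : x⁻¹ * x ^ (-γ) = x ^ (-γ - 1) := by
      rw [← Real.rpow_neg_one x, ← Real.rpow_add hx0]; ring_nf
    rw [e1, ← e2]
    field_simp
    ring
  apply hcongr.congr_of_eventuallyEq
  filter_upwards [Filter.mem_of_superset (isOpen_Ioi.mem_nhds hx) (Set.Ioi_subset_Ici le_rfl)]
    with y hy
  exact hfun_eq hγ hy

lemma tail_eq {f : ℝ → ℝ} (hf : IntegrableOn f (Set.Ioi 1)) {x : ℝ} (hx : 1 ≤ x) :
    ∫ s in Set.Ioi x, f s = (∫ s in Set.Ioi 1, f s) - ∫ s in (1:ℝ)..x, f s := by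
  rw [intervalIntegral.integral_of_le hx, eq_sub_iff_add_eq, add_comm,
    ← setIntegral_union (Set.Ioc_disjoint_Ioi le_rfl) measurableSet_Ioi
      (hf.mono_set Set.Ioc_subset_Ioi_self) (hf.mono_set (Set.Ioi_subset_Ioi hx)),
    Set.Ioc_union_Ioi_eq_Ioi hx]

lemma tail_tendsto {f : ℝ → ℝ} (hf : IntegrableOn f (Set.Ioi 1)) :
    Tendsto (fun x => ∫ s in Set.Ioi x, f s) atTop (𝓝 0) := by
  have h1 := MeasureTheory.intervalIntegral_tendsto_integral_Ioi 1 hf tendsto_id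
  have h2 : Tendsto (fun x => (∫ s in Set.Ioi 1, f s) - ∫ s in (1:ℝ)..x, f s) atTop
      (𝓝 ((∫ s in Set.Ioi 1, f s) - ∫ s in Set.Ioi 1, f s)) := tendsto_const_nhds.sub h1
  rw [sub_self] at h2
  apply h2.congr'
  filter_upwards [eventually_ge_atTop (1:ℝ)] with x hx
  exact (tail_eq hf hx).symm

lemma hasDerivAt_tail {f : ℝ → ℝ} (hfi : IntegrableOn f (Set.Ioi 1))
    (hfc : ContinuousOn f (Set.Ici 1)) {x : ℝ} (hx : 1 < x) :
    HasDerivAt (fun u => ∫ s in Set.Ioi u, f s) (-(f x)) x := by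
  have h1 : HasDerivAt (fun u => (∫ s in Set.Ioi 1, f s) - ∫ s in (1:ℝ)..u, f s) (-(f x)) x :=
    (hasDerivAt_primitive hfc hx).const_sub _
  apply h1.congr_of_eventuallyEq
  filter_upwards [isOpen_Ioi.mem_nhds hx] with y hy
  exact tail_eq hfi (le_of_lt hy)

lemma contOn_tail {f : ℝ → ℝ} (hfi : IntegrableOn f (Set.Ioi 1))
    (hfc : ContinuousOn f (Set.Ici 1)) :
    ContinuousOn (fun u => ∫ s in Set.Ioi u, f s) (Set.Ici 1) := by
  apply ContinuousOn.congr (continuousOn_const.sub (contOn_primitive_Ici hfc))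
  exact fun x hx => tail_eq hfi hx

lemma exists_params {γ : ℝ} (m : ℕ) (hγ : 0 < γ) (hγ1 : γ ≤ 1) (hm : 1 < ((m : ℝ) + 2) * γ) :
    ∃ α β : ℝ, 0 < β ∧ β < γ ∧ β < 1 ∧ 0 < α ∧ α < 1 ∧ α ≤ γ + m * β ∧ 1 < α + β := by
  set ε : ℝ := min (γ/2) ((((m:ℝ)+2)*γ-1)/(2*((m:ℝ)+1))) with hε
  have hm1 : (0:ℝ) < (m:ℝ) + 1 := by positivity
  have hε0 : 0 < ε := lt_min (by positivity) (div_pos (by linarith) (by positivity))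
  have hε1 : ε ≤ γ/2 := min_le_left _ _
  have hε2 : ε ≤ (((m:ℝ)+2)*γ-1)/(2*((m:ℝ)+1)) := min_le_right _ _
  set β : ℝ := γ - ε with hβ
  have hβ0 : 0 < β := by simp only [hβ]; linarith
  have hβγ : β < γ := by simp only [hβ]; linarith
  have hβ1 : β < 1 := lt_of_lt_of_le hβγ hγ1
  clear_value ε β
  have hkey : 1 < γ + ((m:ℝ)+1) * β := by
    have hmul := mul_le_mul_of_nonneg_left hε2 hm1.le
    have heq : ((m:ℝ)+1) * ((((m:ℝ)+2)*γ-1)/(2*((m:ℝ)+1))) = (((m:ℝ)+2)*γ-1)/2 := by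
      field_simp
    rw [heq] at hmul
    have h2 : γ + ((m:ℝ)+1) * β = ((m:ℝ)+2)*γ - ((m:ℝ)+1) * ε := by simp only [hβ]; ring
    linarith
  have hmin : 1 - β < min 1 (γ + (m:ℝ)*β) := by
    rcases le_or_gt 1 (γ + (m:ℝ)*β) with h | h
    · rw [min_eq_left h]; linarith
    · rw [min_eq_right h.le]; nlinarith
  have hminle1 := min_le_left (1:ℝ) (γ + (m:ℝ)*β)
  have hminle2 := min_le_right (1:ℝ) (γ + (m:ℝ)*β)
  have hhalf : (1 - β + min 1 (γ + (m:ℝ)*β))/2 < min 1 (γ + (m:ℝ)*β) := by linarith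
  refine ⟨(1 - β + min 1 (γ + (m:ℝ)*β))/2, β, hβ0, hβγ, hβ1, ?_, ?_, ?_, ?_⟩
  · linarith
  · linarith
  · linarith
  · linarith

lemma h0_nonneg {γ : ℝ} {t : ℝ} (ht : 1 ≤ t) : 0 ≤ h0 γ t := by
  apply intervalIntegral.integral_nonneg ht
  intro s hs
  exact Real.rpow_nonneg (by linarith [hs.1]) _

lemma h0_le {γ β : ℝ} (hβγ : β ≤ γ) (hβ1 : β < 1) {t : ℝ} (ht : 1 ≤ t) :
    h0 γ t ≤ t ^ (1 - β) / (1 - β) := by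
  have ht0 : (0:ℝ) < t := lt_of_lt_of_le one_pos ht
  have h1 : h0 γ t ≤ ∫ s in (1:ℝ)..t, s ^ (-β) := by
    apply intervalIntegral.integral_mono_on ht
      ((contOn_rpow (-γ)).mono (uIcc_subset_pos ht0)).intervalIntegrable
      ((contOn_rpow (-β)).mono (uIcc_subset_pos ht0)).intervalIntegrable
    intro s hs
    exact Real.rpow_le_rpow_of_exponent_le hs.1 (by linarith)
  have h2 : ∫ s in (1:ℝ)..t, s ^ (-β) = (t ^ (1 - β) - 1) / (1 - β) := by
    rw [integral_rpow (Or.inl (by linarith : (-1:ℝ) < -β))]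
    rw [Real.one_rpow, show -β + 1 = 1 - β by ring]
  have h3 : (0:ℝ) < 1 - β := by linarith
  calc h0 γ t ≤ (t ^ (1 - β) - 1) / (1 - β) := h2 ▸ h1
    _ ≤ t ^ (1 - β) / (1 - β) := by
        exact (div_le_div_iff_of_pos_right h3).mpr (by linarith)

lemma hfun_nonneg {γ : ℝ} (hγ : 0 < γ) {t : ℝ} (ht : 1 ≤ t) : 0 ≤ hfun γ t := by
  rw [hfun_eq hγ ht]
  have ht0 : (0:ℝ) < t := lt_of_lt_of_le one_pos ht
  have := h0_nonneg (γ := γ) ht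
  have := Real.rpow_nonneg ht0.le (-γ)
  positivity

lemma hfun_le {γ β : ℝ} (hγ : 0 < γ) (hβγ : β ≤ γ) (hβ1 : β < 1) {t : ℝ} (ht : 1 ≤ t) :
    hfun γ t ≤ ((1 - β)⁻¹ + γ⁻¹) * t ^ (-β) := by
  have ht0 : (0:ℝ) < t := lt_of_lt_of_le one_pos ht
  rw [hfun_eq hγ ht]
  have e1 : t⁻¹ * (t ^ (1 - β) / (1 - β)) = (1 - β)⁻¹ * t ^ (-β) := by
    rw [← Real.rpow_neg_one t]
    rw [div_eq_mul_inv, ← mul_assoc, ← Real.rpow_add ht0]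
    rw [show (-1) + (1 - β) = -β by ring]
    ring
  have h1 : t⁻¹ * h0 γ t ≤ (1 - β)⁻¹ * t ^ (-β) := by
    rw [← e1]
    exact mul_le_mul_of_nonneg_left (h0_le hβγ hβ1 ht) (inv_nonneg.mpr ht0.le)
  have h2 : t ^ (-γ) / γ ≤ γ⁻¹ * t ^ (-β) := by
    rw [div_eq_mul_inv, mul_comm]
    exact mul_le_mul_of_nonneg_left
      (Real.rpow_le_rpow_of_exponent_le ht (by linarith)) (inv_nonneg.mpr hγ.le)
  calc t⁻¹ * h0 γ t + t ^ (-γ) / γ ≤ (1 - β)⁻¹ * t ^ (-β) + γ⁻¹ * t ^ (-β) := add_le_add h1 h2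
    _ = ((1 - β)⁻¹ + γ⁻¹) * t ^ (-β) := by ring

lemma pointwise_bound {γ β : ℝ} (hγ : 0 < γ) (hβ0 : 0 ≤ β) (hβγ : β ≤ γ) (hβ1 : β < 1)
    (k : ℕ) {s : ℝ} (hs : 1 ≤ s) :
    s ^ (-γ) * hfun γ s ^ k ≤ ((1 - β)⁻¹ + γ⁻¹) ^ k * s ^ (-(γ + k * β)) := by
  have hs0 : (0:ℝ) < s := lt_of_lt_of_le one_pos hs
  have hC : (0:ℝ) ≤ (1 - β)⁻¹ + γ⁻¹ := by
    have : (0:ℝ) < 1 - β := by linarith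
    positivity
  have h1 : hfun γ s ^ k ≤ (((1 - β)⁻¹ + γ⁻¹) * s ^ (-β)) ^ k :=
    pow_le_pow_left₀ (hfun_nonneg hγ hs) (hfun_le hγ hβγ hβ1 hs) k
  have h2 : (((1 - β)⁻¹ + γ⁻¹) * s ^ (-β)) ^ k
      = ((1 - β)⁻¹ + γ⁻¹) ^ k * s ^ (-(k * β)) := by
    rw [mul_pow, ← Real.rpow_natCast (s ^ (-β)) k, ← Real.rpow_mul hs0.le]
    ring_nf
  have h3 : s ^ (-γ) * (((1 - β)⁻¹ + γ⁻¹) ^ k * s ^ (-(k * β)))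
      = ((1 - β)⁻¹ + γ⁻¹) ^ k * s ^ (-(γ + k * β)) := by
    rw [show -(γ + k * β) = -γ + -(k * β) by ring, Real.rpow_add hs0]
    ring
  calc s ^ (-γ) * hfun γ s ^ k ≤ s ^ (-γ) * (((1 - β)⁻¹ + γ⁻¹) * s ^ (-β)) ^ k :=
        mul_le_mul_of_nonneg_left h1 (Real.rpow_nonneg hs0.le _)
    _ = ((1 - β)⁻¹ + γ⁻¹) ^ k * s ^ (-(γ + k * β)) := by rw [h2, h3]

lemma Nfun_nonneg {γ : ℝ} {m : ℕ} (hγ : 0 < γ) {t : ℝ} (ht : 1 ≤ t) : 0 ≤ Nfun γ m t := by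
  apply intervalIntegral.integral_nonneg ht
  intro s hs
  have hs0 : (0:ℝ) < s := lt_of_lt_of_le one_pos hs.1
  exact mul_nonneg (Real.rpow_nonneg hs0.le _) (pow_nonneg (hfun_nonneg hγ hs.1) m)

lemma contOn_Nintegrand {γ : ℝ} (m : ℕ) (hγ : 0 < γ) :
    ContinuousOn (fun s : ℝ => s ^ (-γ) * hfun γ s ^ m) (Set.Ici 1) :=
  ((contOn_rpow (-γ)).mono (fun y (hy : y ∈ Set.Ici (1:ℝ)) => Set.mem_Ioi.mpr (lt_of_lt_of_le one_pos hy))).mul ((contOn_hfun hγ).pow m)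

lemma Nfun_le {γ α β : ℝ} {m : ℕ} (hγ : 0 < γ) (hβ0 : 0 ≤ β) (hβγ : β ≤ γ) (hβ1 : β < 1)
    (hα1 : α < 1) (hαm : α ≤ γ + m * β) {t : ℝ} (ht : 1 ≤ t) :
    Nfun γ m t ≤ ((1 - β)⁻¹ + γ⁻¹) ^ m / (1 - α) * t ^ (1 - α) := by
  have ht0 : (0:ℝ) < t := lt_of_lt_of_le one_pos ht
  set C : ℝ := (1 - β)⁻¹ + γ⁻¹ with hCdef
  have hC : (0:ℝ) ≤ C := by
    have : (0:ℝ) < 1 - β := by linarith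
    positivity
  have h1 : Nfun γ m t ≤ ∫ s in (1:ℝ)..t, C ^ m * s ^ (-α) := by
    apply intervalIntegral.integral_mono_on ht
    · apply ContinuousOn.intervalIntegrable
      apply (contOn_Nintegrand m hγ).mono
      rw [Set.uIcc_of_le ht]; exact Set.Icc_subset_Ici_self
    · exact (((contOn_rpow (-α)).mono (uIcc_subset_pos ht0)).intervalIntegrable).const_mul _
    · intro s hs
      calc s ^ (-γ) * hfun γ s ^ m ≤ C ^ m * s ^ (-(γ + m * β)) :=
            pointwise_bound hγ hβ0 hβγ hβ1 m hs.1
        _ ≤ C ^ m * s ^ (-α) := by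
            apply mul_le_mul_of_nonneg_left _ (pow_nonneg hC m)
            apply Real.rpow_le_rpow_of_exponent_le hs.1
            have : (0:ℝ) ≤ (m:ℝ) := Nat.cast_nonneg m
            linarith
  have h2 : ∫ s in (1:ℝ)..t, C ^ m * s ^ (-α) = C ^ m * ((t ^ (1 - α) - 1) / (1 - α)) := by
    rw [intervalIntegral.integral_const_mul, integral_rpow (Or.inl (by linarith : (-1:ℝ) < -α)),
      Real.one_rpow, show -α + 1 = 1 - α by ring]
  have h3 : (0:ℝ) < 1 - α := by linarith
  have h4 : C ^ m * ((t ^ (1 - α) - 1) / (1 - α)) ≤ C ^ m / (1 - α) * t ^ (1 - α) := by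
    have e1 : C ^ m * ((t ^ (1 - α) - 1) / (1 - α)) = C ^ m * (t ^ (1 - α) - 1) / (1 - α) := by
      ring
    have e2 : C ^ m / (1 - α) * t ^ (1 - α) = C ^ m * t ^ (1 - α) / (1 - α) := by ring
    rw [e1, e2]
    apply (div_le_div_iff_of_pos_right h3).mpr
    nlinarith [pow_nonneg hC m]
  linarith

lemma intOn_pow_tail {γ β : ℝ} (hγ : 0 < γ) (hβ0 : 0 ≤ β) (hβγ : β ≤ γ) (hβ1 : β < 1)
    (k : ℕ) (hk : 1 < γ + k * β) :
    IntegrableOn (fun s : ℝ => s ^ (-γ) * hfun γ s ^ k) (Set.Ioi 1) := by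
  apply Integrable.mono'
    (((integrableOn_Ioi_rpow_of_lt (show -(γ + k * β) < -1 by linarith) one_pos)).const_mul
      (((1 - β)⁻¹ + γ⁻¹) ^ k))
  · exact ((contOn_Nintegrand k hγ).mono (Set.Ioi_subset_Ici le_rfl)).aestronglyMeasurable
      measurableSet_Ioi
  · filter_upwards [ae_restrict_mem measurableSet_Ioi] with s hs
    have hs1 : (1:ℝ) ≤ s := le_of_lt hs
    have hs0 : (0:ℝ) < s := lt_of_lt_of_le one_pos hs1
    rw [Real.norm_eq_abs, abs_of_nonneg
      (mul_nonneg (Real.rpow_nonneg hs0.le _) (pow_nonneg (hfun_nonneg hγ hs1) k))]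
    exact pointwise_bound hγ hβ0 hβγ hβ1 k hs1

lemma contOn_Nfun {γ : ℝ} (m : ℕ) (hγ : 0 < γ) : ContinuousOn (Nfun γ m) (Set.Ici 1) :=
  contOn_primitive_Ici (contOn_Nintegrand m hγ)

lemma hasDerivAt_Nfun {γ : ℝ} (m : ℕ) (hγ : 0 < γ) {x : ℝ} (hx : 1 < x) :
    HasDerivAt (Nfun γ m) (x ^ (-γ) * hfun γ x ^ m) x :=
  hasDerivAt_primitive (contOn_Nintegrand m hγ) hx

lemma contOn_f1 {γ : ℝ} (m : ℕ) (hγ : 0 < γ) :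
    ContinuousOn (fun s : ℝ => s ^ (-2:ℝ) * h0 γ s * Nfun γ m s) (Set.Ici 1) :=
  (((contOn_rpow (-2:ℝ)).mono (fun y (hy : y ∈ Set.Ici (1:ℝ)) => Set.mem_Ioi.mpr (lt_of_lt_of_le one_pos hy))).mul
    (contOn_h0 γ)).mul (contOn_Nfun m hγ)

lemma intOn_f1 {γ α β : ℝ} {m : ℕ} (hγ : 0 < γ) (hβ0 : 0 ≤ β) (hβγ : β ≤ γ) (hβ1 : β < 1)
    (hα1 : α < 1) (hα0 : 0 < α) (hαm : α ≤ γ + m * β) (hαβ : 1 < α + β) :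
    IntegrableOn (fun s : ℝ => s ^ (-2:ℝ) * h0 γ s * Nfun γ m s) (Set.Ioi 1) := by
  set C : ℝ := (1 - β)⁻¹ + γ⁻¹ with hCdef
  set K : ℝ := (1 - β)⁻¹ * (C ^ m / (1 - α)) with hKdef
  apply Integrable.mono'
    (((integrableOn_Ioi_rpow_of_lt (show -(α + β) < -1 by linarith) one_pos)).const_mul K)
  · exact ((contOn_f1 m hγ).mono (Set.Ioi_subset_Ici le_rfl)).aestronglyMeasurable
      measurableSet_Ioi
  · filter_upwards [ae_restrict_mem measurableSet_Ioi] with s hs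
    have hs1 : (1:ℝ) ≤ s := le_of_lt hs
    have hs0 : (0:ℝ) < s := lt_of_lt_of_le one_pos hs1
    have hb1 : (0:ℝ) < 1 - β := by linarith
    have hb2 : (0:ℝ) < 1 - α := by linarith
    have hC : (0:ℝ) ≤ C := by positivity
    have hN0 : 0 ≤ Nfun γ m s := Nfun_nonneg hγ hs1
    have hh0 : 0 ≤ h0 γ s := h0_nonneg hs1
    rw [Real.norm_eq_abs, abs_of_nonneg
      (mul_nonneg (mul_nonneg (Real.rpow_nonneg hs0.le _) hh0) hN0)]
    have step : s ^ (-2:ℝ) * h0 γ s * Nfun γ m s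
        ≤ s ^ (-2:ℝ) * (s ^ (1-β)/(1-β)) * (C ^ m / (1-α) * s ^ (1-α)) := by
      apply mul_le_mul
      · exact mul_le_mul_of_nonneg_left (h0_le hβγ hβ1 hs1) (Real.rpow_nonneg hs0.le _)
      · exact Nfun_le hγ hβ0 hβγ hβ1 hα1 hαm hs1
      · exact hN0
      · have h5 : (0:ℝ) ≤ s ^ (1-β) := Real.rpow_nonneg hs0.le _
        have h6 : (0:ℝ) ≤ s ^ (-2:ℝ) := Real.rpow_nonneg hs0.le _
        positivity
    have e : s ^ (-2:ℝ) * (s ^ (1-β)/(1-β)) * (C ^ m/(1-α) * s ^ (1-α)) = K * s ^ (-(α+β)) := by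
      rw [show -(α+β) = (-2:ℝ) + ((1-β) + (1-α)) by ring, Real.rpow_add hs0, Real.rpow_add hs0,
        hKdef]
      ring
    exact le_trans step (le_of_eq e)

lemma Pfun_split {γ β : ℝ} {m : ℕ} (hγ : 0 < γ) (hβ0 : 0 ≤ β) (hβγ : β ≤ γ) (hβ1 : β < 1)
    (hk : 1 < γ + (m + 1) * β) {t : ℝ} (ht : 1 ≤ t) :
    Pfun γ m t = hfun γ t * Nfun γ m t + ∫ s in Set.Ioi t, s ^ (-γ) * hfun γ s ^ (m + 1) := by
  have ht0 : (0:ℝ) < t := lt_of_lt_of_le one_pos ht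
  have hsplit : Set.Ioi (1:ℝ) = Set.Ioc 1 t ∪ Set.Ioi t := (Set.Ioc_union_Ioi_eq_Ioi ht).symm
  have htail := intOn_pow_tail hγ hβ0 hβγ hβ1 (m + 1) (by push_cast; exact hk)
  have heq1 : Set.EqOn (fun s : ℝ => hfun γ t * (s ^ (-γ) * hfun γ s ^ m))
      (fun s : ℝ => s ^ (-γ) * hfun γ (max t s) * hfun γ s ^ m) (Set.Ioc 1 t) := by
    intro s hs
    simp only [max_eq_left hs.2]
    ring
  have heq2 : Set.EqOn (fun s : ℝ => s ^ (-γ) * hfun γ s ^ (m + 1))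
      (fun s : ℝ => s ^ (-γ) * hfun γ (max t s) * hfun γ s ^ m) (Set.Ioi t) := by
    intro s hs
    simp only [max_eq_right (le_of_lt (show t < s from hs)), pow_succ]
    ring
  have hI1 : IntegrableOn (fun s : ℝ => s ^ (-γ) * hfun γ (max t s) * hfun γ s ^ m)
      (Set.Ioc 1 t) := by
    apply IntegrableOn.congr_fun _ heq1 measurableSet_Ioc
    apply IntegrableOn.mono_set _ Set.Ioc_subset_Icc_self
    apply ContinuousOn.integrableOn_compact isCompact_Icc
    exact (continuousOn_const.mul ((contOn_Nintegrand m hγ).mono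
      (fun y hy => hy.1))).congr (fun y _ => rfl)
  have hI2 : IntegrableOn (fun s : ℝ => s ^ (-γ) * hfun γ (max t s) * hfun γ s ^ m)
      (Set.Ioi t) :=
    (htail.mono_set (Set.Ioi_subset_Ioi ht)).congr_fun heq2 measurableSet_Ioi
  have p1 : ∫ s in Set.Ioc 1 t, s ^ (-γ) * hfun γ (max t s) * hfun γ s ^ m
      = hfun γ t * Nfun γ m t := by
    rw [← setIntegral_congr_fun measurableSet_Ioc heq1, MeasureTheory.integral_const_mul,
      ← intervalIntegral.integral_of_le ht]
    rfl
  have p2 : ∫ s in Set.Ioi t, s ^ (-γ) * hfun γ (max t s) * hfun γ s ^ m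
      = ∫ s in Set.Ioi t, s ^ (-γ) * hfun γ s ^ (m + 1) :=
    (setIntegral_congr_fun measurableSet_Ioi heq2).symm
  rw [show Pfun γ m t = ∫ s in Set.Ioi (1:ℝ), s ^ (-γ) * hfun γ (max t s) * hfun γ s ^ m
      from rfl, hsplit,
    setIntegral_union (Set.Ioc_disjoint_Ioi le_rfl) measurableSet_Ioi hI1 hI2, p1, p2]

lemma hN_tendsto {γ α β : ℝ} {m : ℕ} (hγ : 0 < γ) (hβ0 : 0 < β) (hβγ : β ≤ γ) (hβ1 : β < 1)
    (hα1 : α < 1) (hαm : α ≤ γ + m * β) (hαβ : 1 < α + β) :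
    Tendsto (fun x => hfun γ x * Nfun γ m x) atTop (𝓝 0) := by
  set C : ℝ := (1 - β)⁻¹ + γ⁻¹ with hCdef
  have hb1 : (0:ℝ) < 1 - β := by linarith
  have hb2 : (0:ℝ) < 1 - α := by linarith
  have hC : (0:ℝ) ≤ C := by positivity
  set K : ℝ := C * (C ^ m / (1 - α)) with hKdef
  have hg : Tendsto (fun x : ℝ => K * x ^ (1 - α - β)) atTop (𝓝 0) := by
    have := (tendsto_rpow_neg_atTop (show (0:ℝ) < α + β - 1 by linarith)).const_mul K
    rw [mul_zero] at this
    apply this.congr'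
    filter_upwards [eventually_gt_atTop (0:ℝ)] with x hx
    rw [show -(α + β - 1) = 1 - α - β by ring]
  apply squeeze_zero' (g := fun x : ℝ => K * x ^ (1 - α - β))
  · filter_upwards [eventually_ge_atTop (1:ℝ)] with x hx
    exact mul_nonneg (hfun_nonneg hγ hx) (Nfun_nonneg hγ hx)
  · filter_upwards [eventually_ge_atTop (1:ℝ)] with x hx
    have hx0 : (0:ℝ) < x := lt_of_lt_of_le one_pos hx
    have step : hfun γ x * Nfun γ m x ≤ (C * x ^ (-β)) * (C ^ m / (1 - α) * x ^ (1 - α)) := by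
      apply mul_le_mul (hfun_le hγ hβγ hβ1 hx) (Nfun_le hγ hβ0.le hβγ hβ1 hα1 hαm hx)
        (Nfun_nonneg hγ hx) (mul_nonneg hC (Real.rpow_nonneg hx0.le _))
    have e : (C * x ^ (-β)) * (C ^ m / (1 - α) * x ^ (1 - α)) = K * x ^ (1 - α - β) := by
      rw [show (1 : ℝ) - α - β = -β + (1 - α) by ring, Real.rpow_add hx0, hKdef]
      ring
    exact le_trans step (le_of_eq e)
  · exact hg

theorem stmt_10 (γ t : ℝ) (hγ : 0 < γ) (hγ1 : γ ≤ 1) (ht : 1 ≤ t) (m : ℕ)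
    (hm : 1 < ((m : ℝ) + 2) * γ) :
    (∫ s in Set.Ioi t, s ^ (-2 : ℝ) * h0 γ s * Nfun γ m s) = Pfun γ m t := by
  obtain ⟨α, β, hβ0, hβγ, hβ1, hα0, hα1, hαm, hαβ⟩ := exists_params m hγ hγ1 hm
  have hk1 : 1 < γ + ((m:ℝ) + 1) * β := by nlinarith
  set f1 : ℝ → ℝ := fun s => s ^ (-2:ℝ) * h0 γ s * Nfun γ m s with hf1
  set f2 : ℝ → ℝ := fun s => s ^ (-γ) * hfun γ s ^ (m+1) with hf2
  have hInt1 : IntegrableOn f1 (Set.Ioi 1) := intOn_f1 hγ hβ0.le hβγ.le hβ1 hα1 hα0 hαm hαβ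
  have hInt2 : IntegrableOn f2 (Set.Ioi 1) :=
    intOn_pow_tail hγ hβ0.le hβγ.le hβ1 (m+1) (by push_cast; linarith)
  have hc1 : ContinuousOn f1 (Set.Ici 1) := contOn_f1 m hγ
  have hc2 : ContinuousOn f2 (Set.Ici 1) := contOn_Nintegrand (m+1) hγ
  set D : ℝ → ℝ :=
    fun u => (∫ s in Set.Ioi u, f1 s) - (hfun γ u * Nfun γ m u + ∫ s in Set.Ioi u, f2 s) with hD
  have hder : ∀ x, 1 < x → HasDerivAt D 0 x := by
    intro x hx
    have hx0 : (0:ℝ) < x := lt_trans one_pos hx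
    have d1 := hasDerivAt_tail hInt1 hc1 hx
    have d2 := (hasDerivAt_hfun hγ hx).mul (hasDerivAt_Nfun m hγ hx)
    have d3 := hasDerivAt_tail hInt2 hc2 hx
    have hcomb := d1.sub (d2.add d3)
    refine hcomb.congr_deriv ?_
    simp only [hf1, hf2]
    ring
  have hlim : Tendsto D atTop (𝓝 0) := by
    have := (tail_tendsto hInt1).sub
      ((hN_tendsto hγ hβ0 hβγ.le hβ1 hα1 hαm hαβ).add (tail_tendsto hInt2))
    simpa using this
  have hgt : ∀ x, 1 < x → D x = 0 := by
    intro x hx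
    have hconst : ∀ M, x ≤ M → D M = D x := by
      intro M hM
      have hc : ContinuousOn D (Set.Icc x M) := fun y hy =>
        ((hder y (lt_of_lt_of_le hx hy.1)).continuousAt).continuousWithinAt
      exact constant_of_has_deriv_right_zero hc
        (fun y hy => (hder y (lt_of_lt_of_le hx hy.1)).hasDerivWithinAt) M
        (Set.right_mem_Icc.mpr hM)
    have hT : Tendsto D atTop (𝓝 (D x)) := by
      apply Tendsto.congr' _ tendsto_const_nhds
      filter_upwards [eventually_ge_atTop x] with M hM
      exact (hconst M hM).symm
    exact tendsto_nhds_unique hT hlim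
  have hone : D 1 = 0 := by
    have hcD : ContinuousWithinAt D (Set.Ici 1) 1 := by
      apply ContinuousWithinAt.sub ((contOn_tail hInt1 hc1) 1 Set.self_mem_Ici)
      exact ContinuousWithinAt.add
        (((contOn_hfun hγ) 1 Set.self_mem_Ici).mul ((contOn_Nfun m hγ) 1 Set.self_mem_Ici))
        ((contOn_tail hInt2 hc2) 1 Set.self_mem_Ici)
    have h1 : Tendsto D (𝓝[>] (1:ℝ)) (𝓝 (D 1)) :=
      hcD.mono_left (nhdsWithin_mono _ Set.Ioi_subset_Ici_self)
    have h2 : Tendsto D (𝓝[>] (1:ℝ)) (𝓝 0) := by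
      apply Tendsto.congr' _ tendsto_const_nhds
      filter_upwards [self_mem_nhdsWithin] with y hy
      exact (hgt y hy).symm
    exact tendsto_nhds_unique h1 h2
  have hDt : D t = 0 := by
    rcases eq_or_lt_of_le ht with h | h
    · rw [← h]; exact hone
    · exact hgt t h
  have hFG : (∫ s in Set.Ioi t, f1 s) = hfun γ t * Nfun γ m t + ∫ s in Set.Ioi t, f2 s := by
    have := hDt
    simp only [hD] at this
    linarith
  rw [Pfun_split hγ hβ0.le hβγ.le hβ1 hk1 ht]
  exact hFG
end

section
/- For every nonnegative integer m and all t ≥ 1, ∫₁ᵗ s^{-γ} Q_m(s) ds ≤ N_{m+1}(t), where Q_m(t) = ∫₁^∞ s^{-γ}(max(t,s))^{-1} h(s)^m ds and N_m(t) = ∫₁ᵗ s^{-γ} h(s)^m ds. -/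
open MeasureTheory Real

section Aux

open Set

variable {γ : ℝ}

lemma ker_nonneg {u s : ℝ} (hs : 1 ≤ s) : 0 ≤ s ^ (-γ) * (max u s)⁻¹ :=
  mul_nonneg (rpow_nonneg (by linarith) _)
    (inv_nonneg.2 (le_trans (by linarith) (le_max_right u s)))

lemma ker_le {u s : ℝ} (hs : 1 ≤ s) : s ^ (-γ) * (max u s)⁻¹ ≤ s ^ (-γ - 1) := by
  have hs0 : (0:ℝ) < s := by linarith
  have h1 : (max u s)⁻¹ ≤ s⁻¹ := inv_anti₀ hs0 (le_max_right u s)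
  calc s ^ (-γ) * (max u s)⁻¹ ≤ s ^ (-γ) * s⁻¹ :=
        mul_le_mul_of_nonneg_left h1 (rpow_nonneg hs0.le _)
    _ = s ^ (-γ - 1) := by
        rw [← Real.rpow_neg_one s, ← Real.rpow_add hs0]; ring_nf

lemma intOn_bdd {f : ℝ → ℝ} {s : Set ℝ} (hs : MeasurableSet s) (hμ : volume s < ⊤)
    (hf : Measurable f) {C : ℝ} (hC : ∀ x ∈ s, |f x| ≤ C) : IntegrableOn f s := by
  apply Integrable.mono' (g := fun _ => C) (integrableOn_const hμ.ne)
    hf.aestronglyMeasurable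
  filter_upwards [ae_restrict_mem hs] with x hx
  simpa [Real.norm_eq_abs] using hC x hx

lemma intOn_dom (hγ : 0 < γ) {f : ℝ → ℝ} {c : ℝ} (hc : 0 < c) (hf : Measurable f)
    {C : ℝ} (hb : ∀ x ∈ Ioi c, |f x| ≤ C * x ^ (-γ - 1)) : IntegrableOn f (Ioi c) := by
  apply Integrable.mono'
    ((integrableOn_Ioi_rpow_of_lt (a := -γ - 1) (by linarith) hc).const_mul C)
    hf.aestronglyMeasurable
  filter_upwards [ae_restrict_mem measurableSet_Ioi] with x hx
  simpa [Real.norm_eq_abs] using hb x hx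

lemma ker_int (hγ : 0 < γ) (u : ℝ) {c : ℝ} (hc : 1 ≤ c) :
    IntegrableOn (fun s : ℝ => s ^ (-γ) * (max u s)⁻¹) (Ioi c) := by
  apply intOn_dom hγ (by linarith : (0:ℝ) < c) (by fun_prop)
  intro x hx
  have hx1 : (1:ℝ) ≤ x := le_of_lt (lt_of_le_of_lt hc hx)
  rw [abs_of_nonneg (ker_nonneg hx1), one_mul]
  exact ker_le hx1

lemma hfun_nonneg_s14 (u : ℝ) : 0 ≤ hfun γ u :=
  setIntegral_nonneg measurableSet_Ioi fun s hs => ker_nonneg (le_of_lt hs)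

lemma hfun_anti (hγ : 0 < γ) : Antitone (hfun γ) := by
  intro u v huv
  apply setIntegral_mono_on (ker_int hγ v le_rfl) (ker_int hγ u le_rfl) measurableSet_Ioi
  intro s hs
  have h0 : (0:ℝ) < max u s := lt_of_lt_of_le (by linarith [mem_Ioi.1 hs]) (le_max_right u s)
  exact mul_le_mul_of_nonneg_left
    (inv_anti₀ h0 (max_le_max huv le_rfl)) (rpow_nonneg (by linarith [mem_Ioi.1 hs]) _)

lemma hfun_meas (hγ : 0 < γ) : Measurable (hfun γ) := (hfun_anti hγ).measurable

lemma hfun_pow_le (hγ : 0 < γ) {u v : ℝ} (huv : u ≤ v) (m : ℕ) :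
    hfun γ v ^ m ≤ hfun γ u ^ m :=
  pow_le_pow_left₀ (hfun_nonneg_s14 v) (hfun_anti hγ huv) m

lemma kerm_int (hγ : 0 < γ) (m : ℕ) (u : ℝ) {c : ℝ} (hc : 1 ≤ c) :
    IntegrableOn (fun s : ℝ => s ^ (-γ) * (max u s)⁻¹ * hfun γ s ^ m) (Ioi c) := by
  apply intOn_dom hγ (by linarith : (0:ℝ) < c)
    ((by fun_prop : Measurable fun s : ℝ => s ^ (-γ) * (max u s)⁻¹).mul
      ((hfun_meas hγ).pow_const m))
  intro x hx
  have hx1 : (1:ℝ) ≤ x := le_of_lt (lt_of_le_of_lt hc hx)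
  simp only [Pi.mul_apply]
  rw [abs_of_nonneg (mul_nonneg (ker_nonneg hx1) (pow_nonneg (hfun_nonneg_s14 x) m))]
  calc x ^ (-γ) * (max u x)⁻¹ * hfun γ x ^ m
      ≤ x ^ (-γ - 1) * hfun γ 1 ^ m :=
        mul_le_mul (ker_le hx1) (hfun_pow_le hγ hx1 m)
          (pow_nonneg (hfun_nonneg_s14 x) m) (rpow_nonneg (by linarith) _)
    _ = hfun γ 1 ^ m * x ^ (-γ - 1) := mul_comm _ _

end Aux

theorem stmt_14 (γ t : ℝ) (hγ : 0 < γ) (hγ1 : γ ≤ 1) (ht : 1 ≤ t) (m : ℕ) :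
    (∫ s in (1:ℝ)..t, s ^ (-γ) * Qfun γ m s) ≤ Nfun γ (m + 1) t := by
  classical
  open Set in
  have hIm : MeasurableSet (Ioc (1:ℝ) t) := measurableSet_Ioc
  have hIμ : volume (Ioc (1:ℝ) t) < ⊤ := measure_Ioc_lt_top
  have hsplit : Ioc (1:ℝ) t ∪ Ioi t = Ioi 1 := Ioc_union_Ioi_eq_Ioi ht
  have hdisj : Disjoint (Ioc (1:ℝ) t) (Ioi t) := Ioc_disjoint_Ioi le_rfl
  set C1 : ℝ := hfun γ 1 ^ m with hC1
  have hC1nn : 0 ≤ C1 := pow_nonneg (hfun_nonneg_s14 1) m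
  -- tail constants
  set cC : ℝ := ∫ s in Ioi t, s ^ (-γ) * s⁻¹ with hcC
  set B : ℝ := ∫ u in Ioi t, u ^ (-γ) * u⁻¹ * hfun γ u ^ m with hB
  -- tail integrability
  have tail_int : ∀ k : ℕ,
      IntegrableOn (fun s : ℝ => s ^ (-γ) * s⁻¹ * hfun γ s ^ k) (Ioi t) := by
    intro k
    refine (kerm_int hγ k 1 (c := t) ht).congr_fun ?_ measurableSet_Ioi
    intro s hs
    have h1s : (1:ℝ) ≤ s := by linarith [mem_Ioi.1 hs]
    simp only [max_eq_right h1s]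
  have tail_int0 : IntegrableOn (fun s : ℝ => s ^ (-γ) * s⁻¹) (Ioi t) := by
    refine (ker_int hγ 1 (c := t) ht).congr_fun ?_ measurableSet_Ioi
    intro s hs
    have h1s : (1:ℝ) ≤ s := by linarith [mem_Ioi.1 hs]
    simp only [max_eq_right h1s]
  have tail_nonneg : ∀ s ∈ Ioi t, (0:ℝ) ≤ s ^ (-γ) * s⁻¹ := by
    intro s hs
    have : (0:ℝ) < s := by linarith [mem_Ioi.1 hs]
    positivity
  have cC_nonneg : 0 ≤ cC := setIntegral_nonneg measurableSet_Ioi tail_nonneg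
  have B_nonneg : 0 ≤ B := setIntegral_nonneg measurableSet_Ioi fun s hs =>
    mul_nonneg (tail_nonneg s hs) (pow_nonneg (hfun_nonneg_s14 s) m)
  -- decomposition of Qfun
  have hQdec : ∀ s : ℝ, s ≤ t → Qfun γ m s
      = (∫ u in Ioc (1:ℝ) t, u ^ (-γ) * (max s u)⁻¹ * hfun γ u ^ m) + B := by
    intro s hst
    rw [Qfun, ← hsplit,
      setIntegral_union hdisj measurableSet_Ioi
        ((kerm_int hγ m s le_rfl).mono_set Ioc_subset_Ioi_self)
        ((kerm_int hγ m s le_rfl).mono_set (Ioi_subset_Ioi ht))]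
    congr 1
    refine setIntegral_congr_fun measurableSet_Ioi fun u hu => ?_
    rw [max_eq_right (le_of_lt (lt_of_le_of_lt hst (mem_Ioi.1 hu)))]
  -- decomposition of hfun on [1,t]
  have hHdec : ∀ u ∈ Ioc (1:ℝ) t,
      (∫ s in Ioc (1:ℝ) t, s ^ (-γ) * (max u s)⁻¹) = hfun γ u - cC := by
    intro u hu
    have : hfun γ u = (∫ s in Ioc (1:ℝ) t, s ^ (-γ) * (max u s)⁻¹) + cC := by
      rw [hfun, ← hsplit,
        setIntegral_union hdisj measurableSet_Ioi
          ((ker_int hγ u le_rfl).mono_set Ioc_subset_Ioi_self)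
          ((ker_int hγ u le_rfl).mono_set (Ioi_subset_Ioi ht))]
      congr 1
      refine setIntegral_congr_fun measurableSet_Ioi fun s hs => ?_
      rw [max_eq_right (le_of_lt (lt_of_le_of_lt hu.2 (mem_Ioi.1 hs)))]
    linarith
  -- the inner function
  set inner : ℝ → ℝ := fun s => ∫ u in Ioc (1:ℝ) t, u ^ (-γ) * (max s u)⁻¹ * hfun γ u ^ m
    with hinner
  have inner_intg : ∀ s : ℝ,
      IntegrableOn (fun u : ℝ => u ^ (-γ) * (max s u)⁻¹ * hfun γ u ^ m) (Ioc (1:ℝ) t) := by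
    intro s
    exact (kerm_int hγ m s le_rfl).mono_set Ioc_subset_Ioi_self
  have inner_anti : Antitone inner := by
    intro a b hab
    apply setIntegral_mono_on (inner_intg b) (inner_intg a) hIm
    intro u hu
    have h0 : (0:ℝ) < max a u := lt_of_lt_of_le (by linarith [hu.1]) (le_max_right a u)
    exact mul_le_mul_of_nonneg_right
      (mul_le_mul_of_nonneg_left (inv_anti₀ h0 (max_le_max hab le_rfl))
        (rpow_nonneg (by linarith [hu.1]) _))
      (pow_nonneg (hfun_nonneg_s14 u) m)
  have inner_nonneg : ∀ s : ℝ, 0 ≤ inner s := fun s =>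
    setIntegral_nonneg hIm fun u hu =>
      mul_nonneg (ker_nonneg (le_of_lt hu.1)) (pow_nonneg (hfun_nonneg_s14 u) m)
  have inner_bdd : ∀ s ∈ Ioc (1:ℝ) t, inner s ≤ (volume (Ioc (1:ℝ) t)).toReal * C1 := by
    intro s _
    have : inner s ≤ ∫ _u in Ioc (1:ℝ) t, C1 := by
      apply setIntegral_mono_on (inner_intg s) (integrableOn_const hIμ.ne) hIm
      intro u hu
      have hu1 : (1:ℝ) ≤ u := le_of_lt hu.1
      calc u ^ (-γ) * (max s u)⁻¹ * hfun γ u ^ m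
          ≤ 1 * 1 * C1 := by
            apply mul_le_mul (mul_le_mul (rpow_le_one_of_one_le_of_nonpos hu1 (by linarith))
              (inv_le_one_of_one_le₀ (le_trans hu1 (le_max_right s u)))
              (inv_nonneg.2 (le_trans (by linarith) (le_max_right s u)))
              zero_le_one) (hfun_pow_le hγ hu1 m) (pow_nonneg (hfun_nonneg_s14 u) m) (by norm_num)
      _ = C1 := by ring
    simpa [Measure.restrict_apply, smul_eq_mul, ENNReal.toReal_ofReal'] using this
  -- rewrite interval integrals as set integrals
  rw [intervalIntegral.integral_of_le ht]
  have hNfun : ∀ k : ℕ, Nfun γ k t = ∫ u in Ioc (1:ℝ) t, u ^ (-γ) * hfun γ u ^ k := by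
    intro k; rw [Nfun, intervalIntegral.integral_of_le ht]
  -- integrability on the box
  have intN : ∀ k : ℕ, IntegrableOn (fun u : ℝ => u ^ (-γ) * hfun γ u ^ k) (Ioc (1:ℝ) t) := by
    intro k
    apply intOn_bdd hIm hIμ ((by fun_prop : Measurable fun u : ℝ => u ^ (-γ)).mul
      ((hfun_meas hγ).pow_const k))
    intro u hu
    have hu1 : (1:ℝ) ≤ u := le_of_lt hu.1
    simp only [Pi.mul_apply]
    rw [abs_of_nonneg (mul_nonneg (rpow_nonneg (by linarith) _) (pow_nonneg (hfun_nonneg_s14 u) k))]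
    calc u ^ (-γ) * hfun γ u ^ k ≤ 1 * hfun γ 1 ^ k :=
          mul_le_mul (rpow_le_one_of_one_le_of_nonpos hu1 (by linarith))
            (hfun_pow_le hγ hu1 k) (pow_nonneg (hfun_nonneg_s14 u) k) zero_le_one
      _ = hfun γ 1 ^ k := one_mul _
  have int_rpow : IntegrableOn (fun s : ℝ => s ^ (-γ)) (Ioc (1:ℝ) t) := by
    apply intOn_bdd hIm hIμ (by fun_prop) (C := 1)
    intro u hu
    rw [abs_of_nonneg (rpow_nonneg (by linarith [hu.1]) _)]
    exact rpow_le_one_of_one_le_of_nonpos (le_of_lt hu.1) (by linarith)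
  set N0 : ℝ := ∫ s in Ioc (1:ℝ) t, s ^ (-γ) with hN0
  have N0_nonneg : 0 ≤ N0 := setIntegral_nonneg hIm fun s hs =>
    rpow_nonneg (by linarith [hs.1]) _
  -- step 1 : split off B
  have int1 : IntegrableOn (fun s : ℝ => s ^ (-γ) * inner s) (Ioc (1:ℝ) t) := by
    apply intOn_bdd hIm hIμ ((by fun_prop : Measurable fun s : ℝ => s ^ (-γ)).mul
      inner_anti.measurable) (C := (volume (Ioc (1:ℝ) t)).toReal * C1)
    intro s hs
    simp only [Pi.mul_apply]
    rw [abs_of_nonneg (mul_nonneg (rpow_nonneg (by linarith [hs.1]) _) (inner_nonneg s))]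
    calc s ^ (-γ) * inner s ≤ 1 * ((volume (Ioc (1:ℝ) t)).toReal * C1) :=
          mul_le_mul (rpow_le_one_of_one_le_of_nonpos (le_of_lt hs.1) (by linarith))
            (inner_bdd s hs) (inner_nonneg s) zero_le_one
      _ = (volume (Ioc (1:ℝ) t)).toReal * C1 := one_mul _
  have step1 : (∫ s in Ioc (1:ℝ) t, s ^ (-γ) * Qfun γ m s)
      = (∫ s in Ioc (1:ℝ) t, s ^ (-γ) * inner s) + B * N0 := by
    have e1 : ∀ s ∈ Ioc (1:ℝ) t,
        s ^ (-γ) * Qfun γ m s = s ^ (-γ) * inner s + s ^ (-γ) * B := by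
      intro s hs; rw [hQdec s hs.2]; ring
    rw [setIntegral_congr_fun hIm e1, integral_add int1 (int_rpow.mul_const B)]
    congr 1
    rw [integral_mul_const, mul_comm]
  -- Fubini
  have meas2 : Measurable fun p : ℝ × ℝ =>
      p.1 ^ (-γ) * (p.2 ^ (-γ) * (max p.1 p.2)⁻¹ * hfun γ p.2 ^ m) := by
    have h4 : Measurable fun p : ℝ × ℝ => hfun γ p.2 ^ m :=
      ((hfun_meas hγ).comp measurable_snd).pow_const m
    exact (by fun_prop : Measurable fun p : ℝ × ℝ => p.1 ^ (-γ)).mul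
      (((by fun_prop : Measurable fun p : ℝ × ℝ => p.2 ^ (-γ)).mul
        (by fun_prop : Measurable fun p : ℝ × ℝ => (max p.1 p.2)⁻¹)).mul h4)
  have hint : Integrable (Function.uncurry fun s u : ℝ =>
      s ^ (-γ) * (u ^ (-γ) * (max s u)⁻¹ * hfun γ u ^ m))
      ((volume.restrict (Ioc (1:ℝ) t)).prod (volume.restrict (Ioc (1:ℝ) t))) := by
    rw [Measure.prod_restrict]
    apply Integrable.mono' (g := fun _ => C1)
      (integrableOn_const (by rw [Measure.prod_prod]; exact (ENNReal.mul_lt_top hIμ hIμ).ne))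
      (meas2.aestronglyMeasurable)
    filter_upwards [ae_restrict_mem (hIm.prod hIm)] with p hp
    obtain ⟨hp1, hp2⟩ := hp
    have h11 : (1:ℝ) ≤ p.1 := le_of_lt hp1.1
    have h21 : (1:ℝ) ≤ p.2 := le_of_lt hp2.1
    have hmax : (0:ℝ) ≤ (max p.1 p.2)⁻¹ := inv_nonneg.2 (le_trans (by linarith) (le_max_left _ _))
    show ‖p.1 ^ (-γ) * (p.2 ^ (-γ) * (max p.1 p.2)⁻¹ * hfun γ p.2 ^ m)‖ ≤ C1
    rw [Real.norm_eq_abs,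
      abs_of_nonneg (mul_nonneg (rpow_nonneg (by linarith) _)
        (mul_nonneg (mul_nonneg (rpow_nonneg (by linarith) _) hmax)
          (pow_nonneg (hfun_nonneg_s14 _) m)))]
    calc p.1 ^ (-γ) * (p.2 ^ (-γ) * (max p.1 p.2)⁻¹ * hfun γ p.2 ^ m)
        ≤ 1 * (1 * 1 * C1) := by
          apply mul_le_mul (rpow_le_one_of_one_le_of_nonpos h11 (by linarith))
          · apply mul_le_mul (mul_le_mul (rpow_le_one_of_one_le_of_nonpos h21 (by linarith))
              (inv_le_one_of_one_le₀ (le_trans h11 (le_max_left _ _))) hmax zero_le_one)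
              (hfun_pow_le hγ h21 m) (pow_nonneg (hfun_nonneg_s14 _) m) (by norm_num)
          · exact mul_nonneg (mul_nonneg (rpow_nonneg (by linarith) _) hmax)
              (pow_nonneg (hfun_nonneg_s14 _) m)
          · exact zero_le_one
      _ = C1 := by ring
  have fub : (∫ s in Ioc (1:ℝ) t, s ^ (-γ) * inner s)
      = ∫ u in Ioc (1:ℝ) t, u ^ (-γ) * hfun γ u ^ m * (hfun γ u - cC) := by
    have lhs_eq : (∫ s in Ioc (1:ℝ) t, s ^ (-γ) * inner s)
        = ∫ s in Ioc (1:ℝ) t, ∫ u in Ioc (1:ℝ) t,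
            s ^ (-γ) * (u ^ (-γ) * (max s u)⁻¹ * hfun γ u ^ m) := by
      refine setIntegral_congr_fun hIm fun s _ => ?_
      rw [hinner]
      exact (integral_const_mul _ _).symm
    rw [lhs_eq, integral_integral_swap hint]
    refine setIntegral_congr_fun hIm fun u hu => ?_
    have e2 : ∀ s : ℝ, s ^ (-γ) * (u ^ (-γ) * (max s u)⁻¹ * hfun γ u ^ m)
        = (u ^ (-γ) * hfun γ u ^ m) * (s ^ (-γ) * (max u s)⁻¹) := by
      intro s; rw [max_comm s u]; ring
    calc (∫ s in Ioc (1:ℝ) t, s ^ (-γ) * (u ^ (-γ) * (max s u)⁻¹ * hfun γ u ^ m))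
        = ∫ s in Ioc (1:ℝ) t, (u ^ (-γ) * hfun γ u ^ m) * (s ^ (-γ) * (max u s)⁻¹) := by
          exact setIntegral_congr_fun hIm fun s _ => e2 s
      _ = (u ^ (-γ) * hfun γ u ^ m) * ∫ s in Ioc (1:ℝ) t, s ^ (-γ) * (max u s)⁻¹ :=
          integral_const_mul _ _
      _ = u ^ (-γ) * hfun γ u ^ m * (hfun γ u - cC) := by rw [hHdec u hu]
  have split2 : (∫ u in Ioc (1:ℝ) t, u ^ (-γ) * hfun γ u ^ m * (hfun γ u - cC))
      = Nfun γ (m + 1) t - cC * (∫ u in Ioc (1:ℝ) t, u ^ (-γ) * hfun γ u ^ m) := by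
    have e3 : ∀ u ∈ Ioc (1:ℝ) t, u ^ (-γ) * hfun γ u ^ m * (hfun γ u - cC)
        = u ^ (-γ) * hfun γ u ^ (m + 1) - cC * (u ^ (-γ) * hfun γ u ^ m) := by
      intro u _; rw [pow_succ]; ring
    rw [setIntegral_congr_fun hIm e3,
      integral_sub (intN (m + 1)) ((intN m).const_mul cC), integral_const_mul, hNfun (m + 1)]
  -- tail bound : B ≤ hfun γ t ^ m * cC
  have hBle : B ≤ hfun γ t ^ m * cC := by
    have : B ≤ ∫ u in Ioi t, (u ^ (-γ) * u⁻¹) * hfun γ t ^ m := by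
      apply setIntegral_mono_on (tail_int m) (tail_int0.mul_const _) measurableSet_Ioi
      intro u hu
      exact mul_le_mul_of_nonneg_left (hfun_pow_le hγ (le_of_lt (mem_Ioi.1 hu)) m)
        (tail_nonneg u hu)
    rwa [integral_mul_const, ← hcC, mul_comm] at this
  -- N0 bound : hfun γ t ^ m * N0 ≤ N_m
  have hNle : hfun γ t ^ m * N0 ≤ ∫ u in Ioc (1:ℝ) t, u ^ (-γ) * hfun γ u ^ m := by
    rw [hN0, ← integral_const_mul]
    apply setIntegral_mono_on (int_rpow.const_mul _) (intN m) hIm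
    intro u hu
    rw [mul_comm]
    exact mul_le_mul_of_nonneg_left (hfun_pow_le hγ hu.2 m)
      (rpow_nonneg (by linarith [hu.1]) _)
  have hNm_nonneg : (0:ℝ) ≤ ∫ u in Ioc (1:ℝ) t, u ^ (-γ) * hfun γ u ^ m :=
    setIntegral_nonneg hIm fun u hu =>
      mul_nonneg (rpow_nonneg (by linarith [hu.1]) _) (pow_nonneg (hfun_nonneg_s14 u) m)
  have key : B * N0 ≤ cC * (∫ u in Ioc (1:ℝ) t, u ^ (-γ) * hfun γ u ^ m) := by
    calc B * N0 ≤ (hfun γ t ^ m * cC) * N0 := mul_le_mul_of_nonneg_right hBle N0_nonneg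
      _ = cC * (hfun γ t ^ m * N0) := by ring
      _ ≤ cC * (∫ u in Ioc (1:ℝ) t, u ^ (-γ) * hfun γ u ^ m) :=
          mul_le_mul_of_nonneg_left hNle cC_nonneg
  rw [step1, fub, split2]
  linarith
end
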